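/- arXiv:2202.13591 — 3 statements merged into one kernel-verified Lean document; each statement's English description precedes it below -/
import Mathlib

section
/- For any string T with RLE size m, the number of type-4 minimal absent words for T (MAWs aub with R(aub) ≥ 4, a ≠ u[1], b ≠ u[|u|]) is O(m²). More precisely |M₄| ≤ (2(2m−3))². -/
/-- `w` occurs in `T` iff `w` is a (contiguous) substring, i.e. infix, of `T`. -/
def IsMAW {α : Type*} [DecidableEq α] (w T : List α) : Prop :=
  w ≠ [] ∧ ¬ w <:+: T ∧ ∀ v : List α, v <:+: w → v ≠ w → v <:+: T

/-- RLE size: the number of maximal runs of equal characters. -/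
def rleSize {α : Type*} [DecidableEq α] (w : List α) : ℕ :=
  (w.destutter (· ≠ ·)).length

/-- A bridge: length ≥ 2, first two characters differ, last two characters differ. -/
def IsBridge {α : Type*} (w : List α) : Prop :=
  2 ≤ w.length ∧ w[0]? ≠ w[1]? ∧ w[w.length - 2]? ≠ w[w.length - 1]?

/-- Truncate the first run to exponent 1. -/
def truncHead {α : Type*} [DecidableEq α] : List α → List α
  | [] => []
  | a :: t => a :: t.dropWhile (· == a)

/-- Remove the first run completely. -/
def dropHeadRun {α : Type*} [DecidableEq α] : List α → List α
  | [] => []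
  | a :: t => (a :: t).dropWhile (· == a)

/-- Remove the first run and truncate the new first run to exponent 1. -/
def leftReduce {α : Type*} [DecidableEq α] (w : List α) : List α :=
  truncHead (dropHeadRun w)

/-- `bridgeReduce w = w^{(1)}`: remove the first and last runs and truncate the
new outer runs to exponent 1; the empty string if `R(w) ≤ 2`. -/
def bridgeReduce {α : Type*} [DecidableEq α] (w : List α) : List α :=
  if rleSize w ≤ 2 then [] else (leftReduce ((leftReduce w).reverse)).reverse


instance {α : Type*} [DecidableEq α] : DecidablePred (IsBridge (α := α)) := fun w => by
  unfold IsBridge; infer_instance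

/-- Number of occurrences of `w` in `T`. -/
def countOcc {α : Type*} [DecidableEq α] (w T : List α) : ℕ :=
  ((List.range (T.length + 1)).filter
    (fun i => decide ((T.drop i).take w.length = w ∧ i + w.length ≤ T.length))).length

/-- `K(w)`: the set of bridge substrings `z` of `T` with `z^{(1)} = w`, as a `Finset`. -/
def KFin {α : Type*} [DecidableEq α] (T w : List α) : Finset (List α) :=
  T.sublists.toFinset.filter (fun z => z <:+: T ∧ IsBridge z ∧ bridgeReduce z = w)

/-- `K₊(w) = { z ∈ K(w) : |K(z)| ≥ 2 }`. -/
def KplusFin {α : Type*} [DecidableEq α] (T w : List α) : Finset (List α) :=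
  (KFin T w).filter (fun z => 2 ≤ (KFin T z).card)

/-- `K^{(t)}(w)`: bridge substrings `z` of `T` with `z^{(t)} = w`. -/
def KIter {α : Type*} [DecidableEq α] (T w : List α) (t : ℕ) : Finset (List α) :=
  T.sublists.toFinset.filter (fun z => z <:+: T ∧ IsBridge z ∧ bridgeReduce^[t] z = w)

/-- `K₊^{(t)}(w) = { z ∈ K^{(t)}(w) : |K(z)| ≥ 2 }`. -/
def KplusIter {α : Type*} [DecidableEq α] (T w : List α) (t : ℕ) : Finset (List α) :=
  (KIter T w t).filter (fun z => 2 ≤ (KFin T z).card)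

/-- `K(w)` as a set. -/
def KSet {α : Type*} [DecidableEq α] (T w : List α) : Set (List α) :=
  {z | z <:+: T ∧ IsBridge z ∧ bridgeReduce z = w}

/-- Type-3 MAW: a MAW `a u b` with `R = 3`, `a ≠ u[1]`, `b ≠ u[|u|]`. -/
def IsType3MAW {α : Type*} [DecidableEq α] (w T : List α) : Prop :=
  IsMAW w T ∧ rleSize w = 3 ∧
    ∃ (a b : α) (u : List α), u ≠ [] ∧ w = a :: u ++ [b] ∧
      u.head? ≠ some a ∧ u.getLast? ≠ some b

/-- Type-4 MAW: a MAW `a u b` with `R ≥ 4`, `a ≠ u[1]`, `b ≠ u[|u|]`. -/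
def IsType4MAW {α : Type*} [DecidableEq α] (w T : List α) : Prop :=
  IsMAW w T ∧ 4 ≤ rleSize w ∧
    ∃ (a b : α) (u : List α), u ≠ [] ∧ w = a :: u ++ [b] ∧
      u.head? ≠ some a ∧ u.getLast? ≠ some b

/-- Type-5 MAW: a MAW `a u b` with `R ≥ 2` and `a = u[1]` or `b = u[|u|]`. -/
def IsType5MAW {α : Type*} [DecidableEq α] (w T : List α) : Prop :=
  IsMAW w T ∧ 2 ≤ rleSize w ∧
    ∃ (a b : α) (u : List α), u ≠ [] ∧ w = a :: u ++ [b] ∧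
      (u.head? = some a ∨ u.getLast? = some b)

/-- The exponent of the longest maximal run of `a` in `T`. -/
noncomputable def maxRunLen {α : Type*} [DecidableEq α] (a : α) (T : List α) : ℕ :=
  sSup {q : ℕ | List.replicate q a <:+: T}

/-- `w` occurs in `T` starting at position `k` (0-based). -/
def OccursAt {α : Type*} [DecidableEq α] (w T : List α) (k : ℕ) : Prop :=
  k + w.length ≤ T.length ∧ (T.drop k).take w.length = w

set_option linter.unusedSectionVars false
set_option linter.unnecessarySeqFocus false

namespace StmtNine
variable {α : Type*} [DecidableEq α]

/-! ### dropWhile / replicate helpers -/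

lemma dropWhile_head_ne {c : α} {s : List α} (h : s.head? ≠ some c) :
    s.dropWhile (· == c) = s := by
  cases s with
  | nil => rfl
  | cons a t =>
    simp only [List.head?_cons, ne_eq, Option.some.injEq] at h
    simp [List.dropWhile_cons, h]

lemma dropWhile_replicate_append (c : α) (j : ℕ) (s : List α) :
    List.dropWhile (· == c) (List.replicate j c ++ s) = List.dropWhile (· == c) s := by
  induction j with
  | zero => rfl
  | succ n ih => simp [List.replicate_succ, List.dropWhile_cons, ih]

lemma replicate_append_cons (j : ℕ) (c : α) (s : List α) :
    List.replicate j c ++ c :: s = c :: (List.replicate j c ++ s) := by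
  induction j with
  | zero => rfl
  | succ n ih => simp only [List.replicate_succ, List.cons_append, ih]

/-! ### change count and rleSize -/

/-- penalty for appending a character -/
def pen : Option α → α → ℕ
  | none, _ => 0
  | some y, x => if y ≠ x then 1 else 0

/-- number of adjacent unequal pairs -/
def chg : List α → ℕ
  | [] => 0
  | [_] => 0
  | a :: b :: l => (if a ≠ b then 1 else 0) + chg (b :: l)

lemma chg_cons_head (a : α) (l : List α) : chg (a :: l) = pen l.head? a + chg l := by
  cases l with
  | nil => rfl
  | cons b t =>
    show (if a ≠ b then 1 else 0) + chg (b :: t) = pen (some b) a + chg (b :: t)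
    congr 1
    simp only [pen, ne_eq]
    by_cases h : a = b <;> simp [h, eq_comm]

lemma chg_append_singleton : ∀ (l : List α) (x : α),
    chg (l ++ [x]) = chg l + pen l.getLast? x
  | [], x => rfl
  | [a], x => by
      show (if a ≠ x then 1 else 0) + 0 = 0 + pen (some a) x
      simp [pen]
  | a :: b :: l, x => by
      show (if a ≠ b then 1 else 0) + chg ((b :: l) ++ [x]) = _
      rw [chg_append_singleton (b :: l) x]
      show _ = (if a ≠ b then 1 else 0) + chg (b :: l) + pen ((a :: b :: l).getLast?) x
      rw [show (a :: b :: l).getLast? = (b :: l).getLast? by simp [List.getLast?_cons_cons]]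
      omega

lemma chg_reverse : ∀ l : List α, chg l.reverse = chg l
  | [] => rfl
  | a :: l => by
      rw [List.reverse_cons, chg_append_singleton, chg_reverse l, List.getLast?_reverse,
        chg_cons_head]
      omega

lemma chg_replicate (n : ℕ) (c : α) : chg (List.replicate n c) = 0 := by
  induction n with
  | zero => rfl
  | succ m ih =>
    cases m with
    | zero => rfl
    | succ k =>
      show (if c ≠ c then 1 else 0) + chg (List.replicate (k+1) c) = 0
      simp only [ne_eq, not_true_eq_false, if_neg, ite_false]
      simpa using ih

lemma chg_cons_le (a : α) (l : List α) : chg (a :: l) ≤ 1 + chg l := by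
  rw [chg_cons_head]; cases l <;> simp [pen] <;> split <;> omega

lemma pen_le_one (o : Option α) (x : α) : pen o x ≤ 1 := by
  cases o <;> simp [pen] <;> split <;> omega

lemma chg_cons_cons (a b : α) (l : List α) :
    chg (a :: b :: l) = (if a ≠ b then 1 else 0) + chg (b :: l) := rfl

lemma length_destutter' : ∀ (l : List α) (a : α),
    (List.destutter' (· ≠ ·) a l).length = 1 + chg (a :: l)
  | [], a => by simp [List.destutter', chg]
  | b :: l, a => by
      rw [List.destutter', chg_cons_cons]
      by_cases h : a ≠ b
      · rw [if_pos h, if_pos h, List.length_cons, length_destutter' l b]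
        omega
      · rw [if_neg h, if_neg h, length_destutter' l a]
        push_neg at h
        subst h
        omega

end StmtNine

lemma StmtNine.rleSize_eq_chg {α : Type*} [DecidableEq α] {z : List α} (h : z ≠ []) :
    rleSize z = 1 + StmtNine.chg z := by
  cases z with
  | nil => exact absurd rfl h
  | cons a l =>
    show (List.destutter (· ≠ ·) (a :: l)).length = _
    rw [List.destutter_cons']
    exact StmtNine.length_destutter' l a

namespace StmtNine
variable {α : Type*} [DecidableEq α]

/-! ### longest common prefix -/

def lcp : List α → List α → List α
  | a :: x, b :: y => if a = b then a :: lcp x y else []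
  | _, _ => []

lemma lcp_nil_left (y : List α) : lcp [] y = [] := by cases y <;> rfl

lemma lcp_nil_right (x : List α) : lcp x [] = [] := by cases x <;> rfl

lemma lcp_cons_cons (a b : α) (x y : List α) :
    lcp (a :: x) (b :: y) = if a = b then a :: lcp x y else [] := rfl

lemma lcp_comm : ∀ x y : List α, lcp x y = lcp y x
  | [], y => by rw [lcp_nil_left, lcp_nil_right]
  | x, [] => by rw [lcp_nil_left, lcp_nil_right]
  | a :: x, b :: y => by
      rw [lcp_cons_cons, lcp_cons_cons]
      by_cases h : a = b
      · subst h; rw [if_pos rfl, if_pos rfl, lcp_comm x y]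
      · rw [if_neg h, if_neg (Ne.symm h)]

lemma lcp_prefix_left : ∀ x y : List α, lcp x y <+: x
  | [], y => by rw [lcp_nil_left]
  | x, [] => by rw [lcp_nil_right]; exact List.nil_prefix
  | a :: x, b :: y => by
      rw [lcp_cons_cons]
      by_cases h : a = b
      · rw [if_pos h]
        exact (List.cons_prefix_cons).2 ⟨rfl, lcp_prefix_left x y⟩
      · rw [if_neg h]; exact List.nil_prefix

lemma lcp_prefix_right (x y : List α) : lcp x y <+: y := by
  rw [lcp_comm]; exact lcp_prefix_left y x

lemma prefix_lcp : ∀ {z x y : List α}, z <+: x → z <+: y → z <+: lcp x y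
  | [], _, _, _, _ => List.nil_prefix
  | c :: z, x, y, hx, hy => by
      obtain ⟨x', rfl⟩ : ∃ x', x = c :: x' := by
        cases x with
        | nil => exact absurd hx (by simp)
        | cons a x' =>
          obtain ⟨rfl, -⟩ := List.cons_prefix_cons.1 hx
          exact ⟨x', rfl⟩
      obtain ⟨y', rfl⟩ : ∃ y', y = c :: y' := by
        cases y with
        | nil => exact absurd hy (by simp)
        | cons b y' =>
          obtain ⟨rfl, -⟩ := List.cons_prefix_cons.1 hy
          exact ⟨y', rfl⟩
      rw [lcp_cons_cons, if_pos rfl]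
      exact (List.cons_prefix_cons).2
        ⟨rfl, prefix_lcp (List.cons_prefix_cons.1 hx).2 (List.cons_prefix_cons.1 hy).2⟩

lemma lcp_concat_ne : ∀ (z : List α) {a b : α} (x y : List α), a ≠ b →
    lcp (z ++ a :: x) (z ++ b :: y) = z
  | [], a, b, x, y, h => by rw [List.nil_append, List.nil_append, lcp_cons_cons, if_neg h]
  | c :: z, a, b, x, y, h => by
      rw [List.cons_append, List.cons_append, lcp_cons_cons, if_pos rfl,
        lcp_concat_ne z x y h]

lemma prefix_eq_of_length {t x₁ x₂ : List α} (h₁ : x₁ <+: t) (h₂ : x₂ <+: t)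
    (h : x₁.length = x₂.length) : x₁ = x₂ := by
  rcases List.prefix_or_prefix_of_prefix h₁ h₂ with h' | h'
  · exact h'.eq_of_length h
  · exact (h'.eq_of_length h.symm).symm

lemma take_eq_of_prefix_le {μ x : List α} (h : μ <+: x) {k : ℕ} (hk : k ≤ μ.length) :
    x.take k = μ.take k := by
  obtain ⟨r, rfl⟩ := h
  exact List.take_append_of_le_length hk

/-- if `lcp z x` is shorter than `lcp z y` then `lcp y x = lcp z x`. -/
lemma lcp_eq_of_lt {z x y : List α} (h : (lcp z x).length < (lcp z y).length) :
    lcp y x = lcp z x := by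
  have h1 : lcp z x <+: lcp z y := by
    rcases List.prefix_or_prefix_of_prefix (lcp_prefix_left z x) (lcp_prefix_left z y)
      with h' | h'
    · exact h'
    · have := h'.length_le; omega
  have hy : lcp z x <+: y := h1.trans (lcp_prefix_right z y)
  have hx : lcp z x <+: x := lcp_prefix_right z x
  have hle : lcp z x <+: lcp y x := prefix_lcp hy hx
  rcases List.prefix_or_prefix_of_prefix (lcp_prefix_right y x) hx with hν | hν
  · exact hν.eq_of_length (le_antisymm hν.length_le hle.length_le)
  · by_cases hlen : (lcp y x).length = (lcp z x).length
    · exact (hle.eq_of_length hlen.symm).symm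
    · exfalso
      have hlt : (lcp z x).length < (lcp y x).length := by
        have := hν.length_le; omega
      set k := (lcp z x).length + 1 with hk
      have hk1 : k ≤ (lcp y x).length := hlt
      have hk2 : k ≤ (lcp z y).length := h
      have e1 : ((lcp y x).take k) = ((lcp z y).take k) := by
        apply prefix_eq_of_length (t := y)
        · exact ((List.take_prefix k (lcp y x)).trans (lcp_prefix_left y x))
        · exact ((List.take_prefix k (lcp z y)).trans (lcp_prefix_right z y))
        · rw [List.length_take, List.length_take]
          omega
      have p1 : ((lcp y x).take k) <+: x :=
        (List.take_prefix k (lcp y x)).trans (lcp_prefix_right y x)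
      have p2 : ((lcp y x).take k) <+: z := by
        rw [e1]; exact (List.take_prefix k (lcp z y)).trans (lcp_prefix_left z y)
      have : ((lcp y x).take k) <+: lcp z x := prefix_lcp p2 p1
      have := this.length_le
      rw [List.length_take] at this
      omega

/-! ### the two counting finsets -/

def lcpFinset (S : Finset (List α)) : Finset (List α) :=
  ((S ×ˢ S).filter (fun p => p.1 ≠ p.2)).image fun p => lcp p.1 p.2

def branchFinset (S : Finset (List α)) : Finset (List α) :=
  ((S ×ˢ S).filter (fun p => p.1 ≠ p.2 ∧ (lcp p.1 p.2).length < p.1.length)).image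
    fun p => p.1.take ((lcp p.1 p.2).length + 1)

lemma mem_lcpFinset {S : Finset (List α)} {x y : List α} (hx : x ∈ S) (hy : y ∈ S)
    (hxy : x ≠ y) : lcp x y ∈ lcpFinset S := by
  apply Finset.mem_image.2
  exact ⟨(x, y), Finset.mem_filter.2 ⟨Finset.mem_product.2 ⟨hx, hy⟩, hxy⟩, rfl⟩

lemma mem_branchFinset {S : Finset (List α)} {x y : List α} (hx : x ∈ S) (hy : y ∈ S)
    (hxy : x ≠ y) (hlen : (lcp x y).length < x.length) :
    x.take ((lcp x y).length + 1) ∈ branchFinset S := by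
  apply Finset.mem_image.2
  exact ⟨(x, y), Finset.mem_filter.2 ⟨Finset.mem_product.2 ⟨hx, hy⟩, hxy, hlen⟩, rfl⟩

lemma lcpFinset_eq_empty {S : Finset (List α)} (h : S.card ≤ 1) : lcpFinset S = ∅ := by
  rw [Finset.eq_empty_iff_forall_notMem]
  intro l hl
  obtain ⟨p, hp, -⟩ := Finset.mem_image.1 hl
  obtain ⟨hprod, hne⟩ := Finset.mem_filter.1 hp
  obtain ⟨h1, h2⟩ := Finset.mem_product.1 hprod
  exact hne (Finset.card_le_one.1 h _ h1 _ h2)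

lemma branchFinset_eq_empty {S : Finset (List α)} (h : S.card ≤ 1) : branchFinset S = ∅ := by
  rw [Finset.eq_empty_iff_forall_notMem]
  intro l hl
  obtain ⟨p, hp, -⟩ := Finset.mem_image.1 hl
  obtain ⟨hprod, hne, -⟩ := Finset.mem_filter.1 hp
  obtain ⟨h1, h2⟩ := Finset.mem_product.1 hprod
  exact hne (Finset.card_le_one.1 h _ h1 _ h2)

theorem lcpFinset_card_le : ∀ (n : ℕ) (S : Finset (List α)), S.card ≤ n →
    (lcpFinset S).card ≤ S.card - 1 := by
  intro n
  induction n with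
  | zero =>
    intro S hS
    rw [lcpFinset_eq_empty (by omega)]
    simp
  | succ n ih =>
    intro S hS
    by_cases h1 : S.card ≤ 1
    · rw [lcpFinset_eq_empty h1]; simp
    · push_neg at h1
      obtain ⟨z, hz⟩ : S.Nonempty := Finset.card_pos.1 (by omega)
      set S' := S.erase z with hS'def
      have hcard' : S'.card = S.card - 1 := Finset.card_erase_of_mem hz
      have hS'ne : S'.Nonempty := Finset.card_pos.1 (by omega)
      obtain ⟨w, hwS', hmax⟩ := S'.exists_max_image (fun t => (lcp z t).length) hS'ne
      have claim : ∀ x ∈ S', lcp z x ∈ insert (lcp z w) (lcpFinset S') := by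
        intro x hx
        rcases ((hmax x hx).lt_or_eq) with hlt | heq
        · have he := lcp_eq_of_lt hlt
          have hxw : x ≠ w := by
            rintro rfl; exact absurd rfl hlt.ne
          rw [← he]
          exact Finset.mem_insert_of_mem (mem_lcpFinset hwS' hx (Ne.symm hxw))
        · have : lcp z x = lcp z w :=
            prefix_eq_of_length (lcp_prefix_left z x) (lcp_prefix_left z w) heq
          rw [this]; exact Finset.mem_insert_self _ _
      have key : lcpFinset S ⊆ insert (lcp z w) (lcpFinset S') := by
        intro l hl
        obtain ⟨⟨x, y⟩, hp, rfl⟩ := Finset.mem_image.1 hl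
        obtain ⟨hprod, hxy⟩ := Finset.mem_filter.1 hp
        obtain ⟨hxS, hyS⟩ := Finset.mem_product.1 hprod
        simp only at hxy ⊢
        by_cases hxz : x = z
        · subst hxz
          exact claim y (Finset.mem_erase.2 ⟨Ne.symm hxy, hyS⟩)
        · by_cases hyz : y = z
          · rw [lcp_comm x y, hyz]
            exact claim x (Finset.mem_erase.2 ⟨hxz, hxS⟩)
          · exact Finset.mem_insert_of_mem
              (mem_lcpFinset (Finset.mem_erase.2 ⟨hxz, hxS⟩)
                (Finset.mem_erase.2 ⟨hyz, hyS⟩) hxy)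
      calc (lcpFinset S).card ≤ (insert (lcp z w) (lcpFinset S')).card :=
            Finset.card_le_card key
        _ ≤ (lcpFinset S').card + 1 := Finset.card_insert_le _ _
        _ ≤ (S'.card - 1) + 1 := by
            have := ih S' (by omega)
            omega
        _ ≤ S.card - 1 := by omega

end StmtNine

namespace StmtNine
variable {α : Type*} [DecidableEq α]

theorem branchFinset_card_le : ∀ (n : ℕ) (S : Finset (List α)), S.card ≤ n →
    (branchFinset S).card ≤ 2 * (S.card - 1) := by
  intro n
  induction n with
  | zero =>
    intro S hS
    rw [branchFinset_eq_empty (by omega)]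
    simp
  | succ n ih =>
    intro S hS
    by_cases h1 : S.card ≤ 1
    · rw [branchFinset_eq_empty h1]; simp
    · push_neg at h1
      obtain ⟨z, hz⟩ : S.Nonempty := Finset.card_pos.1 (by omega)
      set S' := S.erase z with hS'def
      have hcard' : S'.card = S.card - 1 := Finset.card_erase_of_mem hz
      have hS'ne : S'.Nonempty := Finset.card_pos.1 (by omega)
      obtain ⟨w, hwS', hmax⟩ := S'.exists_max_image (fun t => (lcp z t).length) hS'ne
      have hwS : w ∈ S := Finset.mem_of_mem_erase hwS'
      have hpw : lcp z w <+: w := lcp_prefix_right z w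
      have key : branchFinset S ⊆
          insert (z.take ((lcp z w).length + 1))
            (insert (w.take ((lcp z w).length + 1)) (branchFinset S')) := by
        intro l hl
        obtain ⟨⟨x, y⟩, hp, rfl⟩ := Finset.mem_image.1 hl
        obtain ⟨hprod, hxy, hlen⟩ := Finset.mem_filter.1 hp
        obtain ⟨hxS, hyS⟩ := Finset.mem_product.1 hprod
        simp only at hxy hlen ⊢
        by_cases hxz : x = z
        · -- element is z.take (|lcp z y| + 1)
          subst hxz
          have hyS' : y ∈ S' := Finset.mem_erase.2 ⟨Ne.symm hxy, hyS⟩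
          rcases ((hmax y hyS').lt_or_eq) with hlt | heq
          · have he : lcp w y = lcp x y := lcp_eq_of_lt hlt
            have hyw : y ≠ w := by rintro rfl; exact absurd rfl hlt.ne
            have hk : (lcp x y).length + 1 ≤ (lcp x w).length := hlt
            have e1 : x.take ((lcp x y).length + 1) = w.take ((lcp x y).length + 1) := by
              rw [take_eq_of_prefix_le (lcp_prefix_left x w) hk,
                take_eq_of_prefix_le (lcp_prefix_right x w) hk]
            rw [e1, ← he]
            refine Finset.mem_insert_of_mem (Finset.mem_insert_of_mem ?_)
            refine mem_branchFinset hwS' hyS' (Ne.symm hyw) ?_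
            rw [he]
            calc (lcp x y).length < (lcp x w).length := hlt
              _ ≤ w.length := hpw.length_le
          · have : lcp x y = lcp x w :=
              prefix_eq_of_length (lcp_prefix_left x y) (lcp_prefix_left x w) heq
            rw [this]
            exact Finset.mem_insert_self _ _
        · by_cases hyz : y = z
          · -- element is x.take (|lcp x z| + 1), x ≠ z
            subst hyz
            have hxS' : x ∈ S' := Finset.mem_erase.2 ⟨hxz, hxS⟩
            by_cases hxw : x = w
            · subst hxw
              rw [lcp_comm x y]
              exact Finset.mem_insert_of_mem (Finset.mem_insert_self _ _)
            · rcases ((hmax x hxS').lt_or_eq) with hlt | heq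
              · have he : lcp w x = lcp y x := lcp_eq_of_lt hlt
                have e2 : lcp x y = lcp x w := by
                  rw [lcp_comm x y, ← he, lcp_comm x w]
                rw [e2]
                refine Finset.mem_insert_of_mem (Finset.mem_insert_of_mem ?_)
                refine mem_branchFinset hxS' hwS' hxw ?_
                rw [← e2]; exact hlen
              · have e3 : lcp y x = lcp y w :=
                  prefix_eq_of_length (lcp_prefix_left y x) (lcp_prefix_left y w) heq
                have hpx : lcp y w <+: x := by rw [← e3]; exact lcp_prefix_right y x
                have hν : lcp y w <+: lcp x w := prefix_lcp hpx hpw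
                by_cases hνlen : (lcp x w).length = (lcp y w).length
                · have hyx : lcp y w = lcp x w := hν.eq_of_length hνlen.symm
                  have e4 : lcp x y = lcp x w := by
                    rw [lcp_comm x y, e3]; exact hyx
                  rw [e4]
                  refine Finset.mem_insert_of_mem (Finset.mem_insert_of_mem ?_)
                  refine mem_branchFinset hxS' hwS' hxw ?_
                  rw [← e4]; exact hlen
                · have hklt : (lcp y w).length + 1 ≤ (lcp x w).length := by
                    have := hν.length_le; omega
                  have e5 : lcp x y = lcp y w := by rw [lcp_comm x y, e3]
                  have e6 : x.take ((lcp y w).length + 1) = w.take ((lcp y w).length + 1) := by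
                    rw [take_eq_of_prefix_le (lcp_prefix_left x w) hklt,
                      take_eq_of_prefix_le (lcp_prefix_right x w) hklt]
                  rw [e5, e6]
                  exact Finset.mem_insert_of_mem (Finset.mem_insert_self _ _)
          · refine Finset.mem_insert_of_mem (Finset.mem_insert_of_mem ?_)
            exact mem_branchFinset (Finset.mem_erase.2 ⟨hxz, hxS⟩)
              (Finset.mem_erase.2 ⟨hyz, hyS⟩) hxy hlen
      calc (branchFinset S).card
          ≤ (insert (z.take ((lcp z w).length + 1))
              (insert (w.take ((lcp z w).length + 1)) (branchFinset S'))).card :=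
            Finset.card_le_card key
        _ ≤ (branchFinset S').card + 2 := by
            have := Finset.card_insert_le (w.take ((lcp z w).length + 1)) (branchFinset S')
            have := Finset.card_insert_le (z.take ((lcp z w).length + 1))
              (insert (w.take ((lcp z w).length + 1)) (branchFinset S'))
            omega
        _ ≤ 2 * (S'.card - 1) + 2 := by
            have := ih S' (by omega)
            omega
        _ ≤ 2 * (S.card - 1) := by omega

end StmtNine

namespace StmtNine
variable {α : Type*} [DecidableEq α]

lemma truncHead_replicate_cons (j : ℕ) (c : α) (s : List α) (hs : s.head? ≠ some c) :
    truncHead (List.replicate j c ++ c :: s) = c :: s := by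
  rw [replicate_append_cons]
  show c :: List.dropWhile (· == c) (List.replicate j c ++ s) = c :: s
  rw [dropWhile_replicate_append, dropWhile_head_ne hs]

/-- The set of "left cores with a diversity witness" relative to a context family `S`. -/
def Vgood (S : Finset (List α)) (v : List α) : Prop :=
  ∃ (a c : α) (k : ℕ) (w' : List α),
    v = a :: (List.replicate k c ++ (c :: w')) ∧ a ≠ c ∧ w'.head? ≠ some c ∧
    (∃ x ∈ S, v.reverse <+: x) ∧
    (∃ y ∈ S, (c :: w').reverse <+: y ∧ ¬ v.reverse <+: y)

lemma rev_shape (a c : α) (k : ℕ) (w' : List α) :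
    (a :: (List.replicate k c ++ (c :: w'))).reverse
      = ((c :: w').reverse ++ List.replicate k c) ++ [a] := by
  simp [List.reverse_cons, List.reverse_append, List.append_assoc]

/-- helper: under an exponent/letter difference, the first core's reverse is a branch elt. -/
lemma exc_branch_left {S : Finset (List α)} {ρ : List α} {c a₁ a₂ : α} {k₁ k₂ : ℕ}
    {x₁ x₂ : List α} (h₁ : a₁ ≠ c)
    (hx₁S : x₁ ∈ S) (hx₁ : ((ρ ++ List.replicate k₁ c) ++ [a₁]) <+: x₁)
    (hx₂S : x₂ ∈ S) (hx₂ : ((ρ ++ List.replicate k₂ c) ++ [a₂]) <+: x₂)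
    (hcase : k₁ < k₂ ∨ (k₁ = k₂ ∧ a₁ ≠ a₂)) :
    ((ρ ++ List.replicate k₁ c) ++ [a₁]) ∈ branchFinset S := by
  obtain ⟨r₁, hr₁⟩ := hx₁
  have hx1' : x₁ = (ρ ++ List.replicate k₁ c) ++ (a₁ :: r₁) := by
    rw [← hr₁]; simp [List.append_assoc]
  obtain ⟨r₂, hr₂⟩ := hx₂
  -- find e ≠ a₁ with x₂ = (ρ ++ replicate k₁ c) ++ e :: t₂
  obtain ⟨e, t₂, hx2', hea⟩ :
      ∃ e t₂, x₂ = (ρ ++ List.replicate k₁ c) ++ (e :: t₂) ∧ a₁ ≠ e := by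
    rcases hcase with hlt | ⟨rfl, hne⟩
    · refine ⟨c, (List.replicate (k₂ - k₁ - 1) c ++ [a₂]) ++ r₂, ?_, h₁⟩
      rw [← hr₂]
      have hsplit : List.replicate k₂ c
          = List.replicate k₁ c ++ (c :: List.replicate (k₂ - k₁ - 1) c) := by
        rw [← List.replicate_succ, List.replicate_append_replicate]
        congr 1
        omega
      rw [hsplit]
      simp [List.append_assoc]
    · refine ⟨a₂, r₂, ?_, hne⟩
      rw [← hr₂]; simp [List.append_assoc]
  have hlcp : lcp x₁ x₂ = ρ ++ List.replicate k₁ c := by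
    rw [hx1', hx2']
    exact lcp_concat_ne _ _ _ hea
  have hx12 : x₁ ≠ x₂ := by
    intro h
    rw [hx1', hx2'] at h
    have h2 := List.append_cancel_left h
    simp only [List.cons.injEq] at h2
    exact hea h2.1
  have hlen : (lcp x₁ x₂).length < x₁.length := by
    rw [hlcp, hx1']
    simp
  have helt : x₁.take ((lcp x₁ x₂).length + 1) = (ρ ++ List.replicate k₁ c) ++ [a₁] := by
    rw [hlcp, hx1']
    rw [show (ρ ++ List.replicate k₁ c).length + 1
        = (ρ ++ List.replicate k₁ c).length + 1 from rfl]
    rw [List.take_append]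
    congr 1 <;> simp
  have := mem_branchFinset hx₁S hx₂S hx12 hlen
  rwa [helt] at this

lemma exc_unique {S : Finset (List α)} {c : α} {w' : List α} {a₁ a₂ : α} {k₁ k₂ : ℕ}
    {v₁ v₂ x₁ x₂ : List α}
    (hv₁ : v₁ = a₁ :: (List.replicate k₁ c ++ (c :: w'))) (h₁ : a₁ ≠ c)
    (hv₂ : v₂ = a₂ :: (List.replicate k₂ c ++ (c :: w'))) (h₂ : a₂ ≠ c)
    (hx₁S : x₁ ∈ S) (hx₁ : v₁.reverse <+: x₁)
    (hx₂S : x₂ ∈ S) (hx₂ : v₂.reverse <+: x₂)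
    (hne : v₁ ≠ v₂) :
    v₁.reverse ∈ branchFinset S ∨ v₂.reverse ∈ branchFinset S := by
  have e₁ : v₁.reverse = ((c :: w').reverse ++ List.replicate k₁ c) ++ [a₁] := by
    rw [hv₁, rev_shape]
  have e₂ : v₂.reverse = ((c :: w').reverse ++ List.replicate k₂ c) ++ [a₂] := by
    rw [hv₂, rev_shape]
  rw [e₁] at hx₁
  rw [e₂] at hx₂
  rcases lt_trichotomy k₁ k₂ with hlt | heq | hgt
  · left
    rw [e₁]
    exact exc_branch_left h₁ hx₁S hx₁ hx₂S hx₂ (Or.inl hlt)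
  · have hane : a₁ ≠ a₂ := by
      intro h
      apply hne
      rw [hv₁, hv₂, heq, h]
    left
    rw [e₁]
    exact exc_branch_left h₁ hx₁S hx₁ hx₂S hx₂ (Or.inr ⟨heq, hane⟩)
  · right
    rw [e₂]
    exact exc_branch_left h₂ hx₂S hx₂ hx₁S hx₁ (Or.inl hgt)

/-- the lcp of the two witnesses of an exceptional core has the form `ρ ++ c^j`. -/
lemma lcp_form {x y ρ : List α} {a c : α} {k : ℕ} {v : List α}
    (hv : v.reverse = (ρ ++ List.replicate k c) ++ [a])
    (hx : v.reverse <+: x) (hy : ρ <+: y) (hny : ¬ v.reverse <+: y) :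
    ∃ j, lcp x y = ρ ++ List.replicate j c := by
  have hρv : ρ <+: v.reverse := by
    rw [hv]
    exact (List.prefix_append ρ _).trans (List.prefix_append _ _)
  have hρx : ρ <+: x := hρv.trans hx
  have hρl : ρ <+: lcp x y := prefix_lcp hρx hy
  obtain ⟨μ, hμ⟩ := hρl
  obtain ⟨r, hr⟩ := hx
  have hxe : x = ρ ++ (List.replicate k c ++ (a :: r)) := by
    rw [← hr, hv]; simp [List.append_assoc]
  by_cases hcase : μ.length ≤ k
  · refine ⟨μ.length, ?_⟩
    rw [← hμ]
    congr 1
    -- μ is a prefix of replicate k c ++ (a :: r)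
    have hpre : ρ ++ μ <+: ρ ++ (List.replicate k c ++ (a :: r)) := by
      rw [hμ, ← hxe]; exact lcp_prefix_left x y
    have hμpre : μ <+: List.replicate k c ++ (a :: r) :=
      (List.prefix_append_right_inj ρ).1 hpre
    have h1 := List.prefix_iff_eq_take.1 hμpre
    rw [List.take_append_of_le_length (by simpa using hcase),
      List.take_replicate, min_eq_left hcase] at h1
    conv_lhs => rw [h1]
  · exfalso
    apply hny
    push_neg at hcase
    -- replicate k c ++ [a] <+: μ
    have hpre : ρ ++ μ <+: ρ ++ (List.replicate k c ++ (a :: r)) := by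
      rw [hμ, ← hxe]; exact lcp_prefix_left x y
    have hμpre : μ <+: List.replicate k c ++ (a :: r) :=
      (List.prefix_append_right_inj ρ).1 hpre
    have hka : List.replicate k c ++ [a] <+: List.replicate k c ++ (a :: r) := by
      rw [List.prefix_append_right_inj]
      exact ⟨r, rfl⟩
    have hcomp : List.replicate k c ++ [a] <+: μ := by
      rcases List.prefix_or_prefix_of_prefix hka hμpre with h' | h'
      · exact h'
      · have hle := h'.length_le
        simp only [List.length_append, List.length_replicate, List.length_singleton] at hle
        have heq : μ = List.replicate k c ++ [a] := h'.eq_of_length (by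
          simp only [List.length_append, List.length_replicate, List.length_singleton]
          omega)
        rw [heq]
    calc v.reverse = (ρ ++ List.replicate k c) ++ [a] := hv
      _ <+: ρ ++ μ := by
          rw [List.append_assoc]
          rw [List.prefix_append_right_inj]
          exact hcomp
      _ = lcp x y := hμ
      _ <+: y := lcp_prefix_right x y

/-- generic counting helper -/
lemma ncard_le_of_rel {β γ : Type*} (s : Set β) (L : Finset γ) (R : β → γ → Prop)
    (htot : ∀ v ∈ s, ∃ l ∈ L, R v l)
    (hinj : ∀ v₁ ∈ s, ∀ v₂ ∈ s, ∀ l, R v₁ l → R v₂ l → v₁ = v₂) :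
    s.ncard ≤ L.card := by
  classical
  rcases s.eq_empty_or_nonempty with rfl | ⟨v₀, hv₀⟩
  · simp
  obtain ⟨l₀, -, -⟩ := htot v₀ hv₀
  have hch : ∀ v : β, ∃ l : γ, v ∈ s → l ∈ L ∧ R v l := by
    intro v
    by_cases hv : v ∈ s
    · obtain ⟨l, hl, hr⟩ := htot v hv
      exact ⟨l, fun _ => ⟨hl, hr⟩⟩
    · exact ⟨l₀, fun h => absurd h hv⟩
  choose f hf using hch
  have := Set.ncard_le_ncard_of_injOn f
    (fun v hv => by simpa using (hf v hv).1)
    (fun v₁ h₁ v₂ h₂ he => hinj v₁ h₁ v₂ h₂ (f v₁) (hf v₁ h₁).2 (he ▸ (hf v₂ h₂).2))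
    (L : Set γ).toFinite
  simpa using this

theorem Vgood_ncard (S : Finset (List α)) :
    {v : List α | Vgood S v}.ncard ≤ 3 * (S.card - 1) := by
  classical
  have hsplit : {v : List α | Vgood S v}
      = {v | Vgood S v ∧ v.reverse ∈ branchFinset S}
        ∪ {v | Vgood S v ∧ v.reverse ∉ branchFinset S} := by
    ext v; by_cases h : v.reverse ∈ branchFinset S <;> simp [h]
  have hNE : {v : List α | Vgood S v ∧ v.reverse ∈ branchFinset S}.ncard
      ≤ (branchFinset S).card := by
    refine ncard_le_of_rel _ (branchFinset S) (fun v l => l = v.reverse) ?_ ?_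
    · rintro v ⟨-, hv⟩; exact ⟨v.reverse, hv, rfl⟩
    · rintro v₁ - v₂ - l rfl h
      have := congrArg List.reverse h
      simpa using this
  have hE : {v : List α | Vgood S v ∧ v.reverse ∉ branchFinset S}.ncard
      ≤ (lcpFinset S).card := by
    refine ncard_le_of_rel _ (lcpFinset S)
      (fun v l => (v.reverse ∉ branchFinset S) ∧
        ∃ (a c : α) (k : ℕ) (w' : List α),
          v = a :: (List.replicate k c ++ (c :: w')) ∧ a ≠ c ∧ w'.head? ≠ some c ∧
          (∃ x ∈ S, v.reverse <+: x) ∧ truncHead l.reverse = c :: w') ?_ ?_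
    · rintro v ⟨hvg, hexc⟩
      obtain ⟨a, c, k, w', hsh, hac, hw', ⟨x, hxS, hx⟩, ⟨y, hyS, hyρ, hyn⟩⟩ := hvg
      refine ⟨lcp x y, ?_, hexc, a, c, k, w', hsh, hac, hw', ⟨x, hxS, hx⟩, ?_⟩
      · apply mem_lcpFinset hxS hyS
        intro h
        rw [h] at hx
        exact hyn hx
      · obtain ⟨j, hj⟩ := lcp_form (ρ := (c :: w').reverse) (by rw [hsh, rev_shape]) hx hyρ hyn
        rw [hj, List.reverse_append, List.reverse_reverse, List.reverse_replicate]
        exact truncHead_replicate_cons j c w' hw'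
    · rintro v₁ ⟨hvg₁, -⟩ v₂ ⟨hvg₂, -⟩ l
        ⟨hexc₁, a₁, c₁, k₁, w₁, hsh₁, hac₁, hw₁, ⟨x₁, hx₁S, hx₁⟩, hp₁⟩
        ⟨hexc₂, a₂, c₂, k₂, w₂, hsh₂, hac₂, hw₂, ⟨x₂, hx₂S, hx₂⟩, hp₂⟩
      have hcw : c₁ = c₂ ∧ w₁ = w₂ := by
        have := hp₁.symm.trans hp₂
        injection this with h1 h2
        exact ⟨h1, h2⟩
      obtain ⟨rfl, rfl⟩ := hcw
      by_contra hne
      rcases exc_unique hsh₁ hac₁ hsh₂ hac₂ hx₁S hx₁ hx₂S hx₂ hne with h | h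
      · exact hexc₁ h
      · exact hexc₂ h
  calc {v : List α | Vgood S v}.ncard
      ≤ {v : List α | Vgood S v ∧ v.reverse ∈ branchFinset S}.ncard
        + {v : List α | Vgood S v ∧ v.reverse ∉ branchFinset S}.ncard := by
        rw [hsplit]; exact Set.ncard_union_le _ _
    _ ≤ (branchFinset S).card + (lcpFinset S).card := by
        exact Nat.add_le_add hNE hE
    _ ≤ 2 * (S.card - 1) + (S.card - 1) := by
        exact Nat.add_le_add (branchFinset_card_le S.card S le_rfl)
          (lcpFinset_card_le S.card S le_rfl)
    _ ≤ 3 * (S.card - 1) := by omega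

end StmtNine

namespace StmtNine
variable {α : Type*} [DecidableEq α]

/-! ### anchors: end positions of bridge occurrences -/

def anchorCond (T : List α) (k : ℕ) : Prop :=
  2 ≤ k ∧ ((T.take k).reverse.head? ≠ (T.take k).reverse.tail.head?)

instance (T : List α) : DecidablePred (anchorCond T) := fun k => by
  unfold anchorCond; infer_instance

def anchorSet (T : List α) : Finset ℕ :=
  (Finset.range (T.length + 1)).filter (anchorCond T)

lemma anchorCond_cons {x : α} {l : List α} {k : ℕ} (h3 : 3 ≤ k) (hk : k ≤ l.length + 1) :
    anchorCond (x :: l) k ↔ anchorCond l (k - 1) := by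
  have hk1 : k - 1 + 1 = k := by omega
  have htake : (x :: l).take k = x :: l.take (k - 1) := by
    have h := List.take_succ_cons (i := k - 1) (a := x) (as := l)
    rw [hk1] at h
    exact h
  have hA : (l.take (k - 1)).length = k - 1 := by
    rw [List.length_take]
    omega
  have hAne : (l.take (k - 1)).reverse ≠ [] := by
    intro h
    have := congrArg List.length h
    rw [List.length_reverse, hA] at this
    simp at this
    omega
  have hAtne : (l.take (k - 1)).reverse.tail ≠ [] := by
    intro h
    have := congrArg List.length h
    rw [List.length_tail, List.length_reverse, hA] at this
    simp at this
    omega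
  unfold anchorCond
  rw [htake, List.reverse_cons, List.head?_append_of_ne_nil _ hAne,
    List.tail_append_of_ne_nil hAne, List.head?_append_of_ne_nil _ hAtne]
  constructor
  · rintro ⟨-, h⟩; exact ⟨by omega, h⟩
  · rintro ⟨-, h⟩; exact ⟨by omega, h⟩

lemma anchorSet_card_le : ∀ T : List α, (anchorSet T).card ≤ chg T := by
  intro T
  induction T with
  | nil =>
    have : anchorSet ([] : List α) = ∅ := by
      rw [Finset.eq_empty_iff_forall_notMem]
      intro k hk
      obtain ⟨hr, h2, -⟩ := Finset.mem_filter.1 hk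
      rw [Finset.mem_range] at hr
      simp at hr
      omega
    rw [this]; simp
  | cons x l ih =>
    have hsub : ∀ k ∈ anchorSet (x :: l), k ≠ 2 → k ∈ (anchorSet l).image (· + 1) := by
      intro k hk hk2
      obtain ⟨hr, hcond⟩ := Finset.mem_filter.1 hk
      rw [Finset.mem_range, List.length_cons] at hr
      have h3 : 3 ≤ k := by
        have := hcond.1
        omega
      have hkle : k ≤ l.length + 1 := by omega
      refine Finset.mem_image.2 ⟨k - 1, ?_, by omega⟩
      refine Finset.mem_filter.2 ⟨?_, (anchorCond_cons h3 hkle).1 hcond⟩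
      rw [Finset.mem_range]
      omega
    by_cases h2 : 2 ∈ anchorSet (x :: l)
    · -- then l = y :: l' with y ≠ x, so pen l.head? x = 1
      have hpen : pen l.head? x = 1 := by
        obtain ⟨hr, -, hcond⟩ := Finset.mem_filter.1 h2
        rw [Finset.mem_range, List.length_cons] at hr
        cases l with
        | nil => simp at hr
        | cons y l' =>
          have : (x :: y :: l').take 2 = [x, y] := rfl
          rw [this] at hcond
          have hyx : y ≠ x := by
            simpa using hcond
          simp [pen, hyx]
      have hsub2 : anchorSet (x :: l) ⊆ insert 2 ((anchorSet l).image (· + 1)) := by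
        intro k hk
        by_cases hk2 : k = 2
        · subst hk2; exact Finset.mem_insert_self _ _
        · exact Finset.mem_insert_of_mem (hsub k hk hk2)
      calc (anchorSet (x :: l)).card
          ≤ (insert 2 ((anchorSet l).image (· + 1))).card := Finset.card_le_card hsub2
        _ ≤ ((anchorSet l).image (· + 1)).card + 1 := Finset.card_insert_le _ _
        _ ≤ (anchorSet l).card + 1 := by
            have := Finset.card_image_le (s := anchorSet l) (f := (· + 1))
            omega
        _ ≤ chg l + 1 := by have := ih; omega
        _ ≤ chg (x :: l) := by rw [chg_cons_head, hpen]; omega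
    · have hsub2 : anchorSet (x :: l) ⊆ (anchorSet l).image (· + 1) := by
        intro k hk
        refine hsub k hk ?_
        rintro rfl; exact h2 hk
      calc (anchorSet (x :: l)).card
          ≤ ((anchorSet l).image (· + 1)).card := Finset.card_le_card hsub2
        _ ≤ (anchorSet l).card := Finset.card_image_le
        _ ≤ chg l := ih
        _ ≤ chg (x :: l) := by rw [chg_cons_head]; omega

/-- context family: reversed prefixes of `T` ending at run starts -/
def ctxFinset (T : List α) : Finset (List α) :=
  (anchorSet T).image fun k => (T.take k).reverse

lemma ctxFinset_card_le (T : List α) : (ctxFinset T).card ≤ chg T :=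
  le_trans Finset.card_image_le (anchorSet_card_le T)

/-- occurrence-end lemma: a length-≥2 substring whose last two characters differ
gives a context of `T` having its reverse as a prefix. -/
lemma ctx_of_split {T P v Q : List α} (hT : T = P ++ v ++ Q) (h2 : 2 ≤ v.length)
    (hbr : v.reverse.head? ≠ v.reverse.tail.head?) :
    v.reverse ++ P.reverse ∈ ctxFinset T ∧ v.reverse <+: v.reverse ++ P.reverse := by
  have hvne : v.reverse ≠ [] := by
    intro h
    have hl := congrArg List.length h
    simp only [List.length_reverse, List.length_nil] at hl
    omega
  have hvtne : v.reverse.tail ≠ [] := by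
    intro h
    have hl := congrArg List.length h
    simp only [List.length_tail, List.length_reverse, List.length_nil] at hl
    omega
  have htake : T.take (P.length + v.length) = P ++ v := by
    rw [hT, List.take_left']
    rw [List.length_append]
  have hmem : (P.length + v.length) ∈ anchorSet T := by
    refine Finset.mem_filter.2 ⟨?_, ?_, ?_⟩
    · rw [Finset.mem_range, hT]
      simp only [List.length_append]
      omega
    · show 2 ≤ P.length + v.length
      omega
    · rw [htake, List.reverse_append, List.head?_append_of_ne_nil _ hvne,
        List.tail_append_of_ne_nil hvne, List.head?_append_of_ne_nil _ hvtne]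
      exact hbr
  constructor
  · refine Finset.mem_image.2 ⟨P.length + v.length, hmem, ?_⟩
    rw [htake, List.reverse_append]
  · exact List.prefix_append _ _

end StmtNine

namespace StmtNine
variable {α : Type*} [DecidableEq α]

def vcore (z : List α) : List α := (truncHead z.dropLast.reverse).reverse

lemma dropWhile_head?_not (pr : α → Bool) :
    ∀ (l : List α) {x : α}, (l.dropWhile pr).head? = some x → pr x = false := by
  intro l
  induction l with
  | nil => intro x h; simp at h
  | cons a t ih =>
    intro x h
    rw [List.dropWhile_cons] at h
    by_cases ha : pr a
    · rw [if_pos ha] at h; exact ih h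
    · rw [if_neg ha] at h
      simp only [List.head?_cons, Option.some.injEq] at h
      subst h
      simpa using ha

/-- peel the leading run off a non-constant list -/
lemma peel_head {u : List α} (hne : u ≠ []) :
    ∃ (c : α) (p : ℕ) (u₂ : List α), 1 ≤ p ∧ u = List.replicate p c ++ u₂ ∧
      u₂.head? ≠ some c ∧ (u₂ = [] → chg u = 0) := by
  obtain ⟨c, t, rfl⟩ : ∃ c t, u = c :: t := by
    cases u with
    | nil => exact absurd rfl hne
    | cons c t => exact ⟨c, t, rfl⟩
  refine ⟨c, ((c :: t).takeWhile (· == c)).length, (c :: t).dropWhile (· == c), ?_, ?_, ?_, ?_⟩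
  · rw [List.takeWhile_cons, if_pos (by simp)]
    simp
  · conv_lhs => rw [← List.takeWhile_append_dropWhile (p := (· == c)) (l := c :: t)]
    congr 1
    apply List.eq_replicate_of_mem
    intro b hb
    have := List.mem_takeWhile_imp hb
    simpa using this
  · intro h
    obtain ⟨x, hx⟩ : ∃ x, ((c :: t).dropWhile (· == c)).head? = some x := ⟨_, h⟩
    have := dropWhile_head?_not (· == c) _ hx
    rw [h] at hx
    simp only [Option.some.injEq] at hx
    subst hx
    simpa using this
  · intro h
    have he : c :: t = List.replicate ((c :: t).takeWhile (· == c)).length c := by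
      conv_lhs => rw [← List.takeWhile_append_dropWhile (p := (· == c)) (l := c :: t)]
      rw [h, List.append_nil]
      apply List.eq_replicate_of_mem
      intro b hb
      have := List.mem_takeWhile_imp hb
      simpa using this
    rw [he]
    exact chg_replicate _ _

/-- head? of replicate-append -/
lemma head?_replicate_append {p : ℕ} (hp : 1 ≤ p) (c : α) (X : List α) :
    (List.replicate p c ++ X).head? = some c := by
  cases p with
  | zero => omega
  | succ n => rw [List.replicate_succ, List.cons_append]; rfl

/-- canonical run decomposition of a list with at least one change -/
lemma decomp {u : List α} (hne : u ≠ []) (hchg : 1 ≤ chg u) :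
    ∃ (c d : α) (p q : ℕ) (M : List α), 1 ≤ p ∧ 1 ≤ q ∧
      u = List.replicate p c ++ M ++ List.replicate q d ∧
      M.head? ≠ some c ∧ M.getLast? ≠ some d ∧ (M = [] → c ≠ d) ∧
      u.head? = some c ∧ u.getLast? = some d := by
  obtain ⟨c, p, u₂, hp, hu, hu₂c, hzero⟩ := peel_head hne
  have hu₂ne : u₂ ≠ [] := by
    intro h
    have := hzero h
    omega
  have hu₂rne : u₂.reverse ≠ [] := by simpa using hu₂ne
  obtain ⟨d, q, s, hq, hrev, hsd, -⟩ := peel_head hu₂rne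
  have hu₂ : u₂ = s.reverse ++ List.replicate q d := by
    have := congrArg List.reverse hrev
    rw [List.reverse_reverse, List.reverse_append, List.reverse_replicate] at this
    exact this
  have hheadc : u.head? = some c := by
    rw [hu]
    cases p with
    | zero => omega
    | succ n =>
      rw [List.replicate_succ, List.cons_append]
      rfl
  have hlastd : u.getLast? = some d := by
    have h1 : u.reverse.head? = some d := by
      rw [hu, List.reverse_append, hrev, List.append_assoc, head?_replicate_append hq]
    rw [← List.head?_reverse]
    exact h1
  by_cases hs : s = []
  · -- u₂ is a constant run of d
    subst hs
    refine ⟨c, d, p, q, [], hp, hq, ?_, by simp, by simp, ?_, hheadc, hlastd⟩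
    · rw [hu, hu₂]
      simp
    · intro _
      have : u₂.head? = some d := by
        rw [hu₂]
        cases q with
        | zero => omega
        | succ n =>
          rw [List.replicate_succ]
          rfl
      intro hcd
      apply hu₂c
      rw [this, hcd]
  · refine ⟨c, d, p, q, s.reverse, hp, hq, ?_, ?_, ?_, ?_, hheadc, hlastd⟩
    · rw [hu, hu₂, List.append_assoc]
    · -- head of s.reverse = head of u₂ ≠ c
      have : u₂.head? = s.reverse.head? := by
        rw [hu₂]
        exact List.head?_append_of_ne_nil _ (by simpa using hs)
      rw [← this]
      exact hu₂c
    · rw [List.getLast?_reverse]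
      exact hsd
    · intro h
      exact absurd (by simpa using h : s = []) hs

/-- the vcore computation -/
lemma vcore_eq {a b c d : α} {p q : ℕ} {M : List α}
    (hp : 1 ≤ p) (hq : 1 ≤ q) (hMd : M.getLast? ≠ some d) (hcd : M = [] → c ≠ d) :
    vcore (a :: ((List.replicate p c ++ M ++ List.replicate q d) ++ [b]))
      = a :: (List.replicate p c ++ M ++ [d]) := by
  have hdl : (a :: ((List.replicate p c ++ M ++ List.replicate q d) ++ [b])).dropLast
      = a :: (List.replicate p c ++ M ++ List.replicate q d) := by
    rw [← List.cons_append, List.dropLast_concat]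
  have hrev : (a :: (List.replicate p c ++ M ++ List.replicate q d)).reverse
      = List.replicate (q - 1) d
        ++ (d :: ((M.reverse ++ List.replicate p c) ++ [a])) := by
    have hq' : List.replicate q d = List.replicate (q - 1) d ++ [d] := by
      have : q = (q - 1) + 1 := by omega
      rw [this, List.replicate_succ']
      simp
    rw [hq']
    simp only [List.reverse_cons, List.reverse_append, List.reverse_replicate,
      List.append_assoc, List.cons_append, List.nil_append, List.append_nil,
      List.singleton_append]
    exact (replicate_append_cons _ d _).symm
  have hshead : ((M.reverse ++ List.replicate p c) ++ [a]).head? ≠ some d := by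
    cases hM : M.reverse with
    | nil =>
      have hM0 : M = [] := by simpa using hM
      rw [List.nil_append, head?_replicate_append hp c [a]]
      simp only [ne_eq, Option.some.injEq]
      exact hcd hM0
    | cons mh mt =>
      have : M.getLast? = some mh := by
        rw [← List.head?_reverse, hM]
        rfl
      rw [List.cons_append, List.cons_append, List.head?_cons]
      intro h
      apply hMd
      rw [this]
      injection h with h'
      rw [h']
  unfold vcore
  rw [hdl, hrev, truncHead_replicate_cons _ _ _ hshead]
  simp [List.reverse_append, List.reverse_replicate, List.append_assoc]

end StmtNine

namespace StmtNine
variable {α : Type*} [DecidableEq α]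

theorem type4_data {z T : List α} (h : IsType4MAW z T) :
    ∃ (a b c d : α) (p q : ℕ) (M : List α),
      1 ≤ p ∧ 1 ≤ q ∧ a ≠ c ∧ b ≠ d ∧
      M.head? ≠ some c ∧ M.getLast? ≠ some d ∧ (M = [] → c ≠ d) ∧
      z = a :: ((List.replicate p c ++ M ++ List.replicate q d) ++ [b]) ∧
      vcore z = a :: (List.replicate p c ++ M ++ [d]) ∧
      vcore z.reverse = b :: (List.replicate q d ++ M.reverse ++ [c]) := by
  obtain ⟨hmaw, hrle, a, b, u, hune, hz, hha, hgb⟩ := h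
  have hzne : z ≠ [] := by rw [hz]; simp
  have hchgz : 3 ≤ chg z := by
    have := rleSize_eq_chg hzne
    omega
  have hchgu : 1 ≤ chg u := by
    have h1 : chg z ≤ 1 + chg (u ++ [b]) := by rw [hz]; exact chg_cons_le _ _
    have h2 : chg (u ++ [b]) = chg u + pen u.getLast? b := chg_append_singleton u b
    have h3 := pen_le_one u.getLast? b
    omega
  obtain ⟨c, d, p, q, M, hp, hq, hu, hMc, hMd, hcd, hhc, hld⟩ := decomp hune hchgu
  have hac : a ≠ c := by
    intro he; apply hha; rw [hhc, he]
  have hbd : b ≠ d := by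
    intro he; apply hgb; rw [hld, he]
  have hzz : z = a :: ((List.replicate p c ++ M ++ List.replicate q d) ++ [b]) := by
    rw [hz, hu]
    exact List.cons_append
  refine ⟨a, b, c, d, p, q, M, hp, hq, hac, hbd, hMc, hMd, hcd, hzz, ?_, ?_⟩
  · rw [hzz]; exact vcore_eq hp hq hMd hcd
  · have hzr : z.reverse
        = b :: ((List.replicate q d ++ M.reverse ++ List.replicate p c) ++ [a]) := by
      rw [hzz]
      simp [List.reverse_append, List.reverse_replicate, List.append_assoc]
    rw [hzr]
    exact vcore_eq hq hp (by rw [List.getLast?_reverse]; exact hMc)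
      (fun hM => Ne.symm (hcd (by simpa using hM)))

theorem type4_reverse {z T : List α} (h : IsType4MAW z T) :
    IsType4MAW z.reverse T.reverse := by
  obtain ⟨⟨hne, hnotinf, hall⟩, hrle, a, b, u, hune, hz, hha, hgb⟩ := h
  refine ⟨⟨by simpa using hne, ?_, ?_⟩, ?_, b, a, u.reverse, by simpa using hune, ?_, ?_, ?_⟩
  · intro hinf
    exact hnotinf (List.reverse_infix.1 hinf)
  · intro v hv hvne
    have h1 : v.reverse <:+: z := List.reverse_infix.1 (by simpa using hv)
    have h2 : v.reverse ≠ z := by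
      intro he; apply hvne; rw [← he]; simp
    have h3 := hall v.reverse h1 h2
    have h4 := List.reverse_infix.2 h3
    simpa using h4
  · have hzne : z ≠ [] := by rw [hz]; simp
    have h1 := rleSize_eq_chg hzne
    have h2 := rleSize_eq_chg (show z.reverse ≠ [] by simpa using hzne)
    rw [h2, chg_reverse]
    omega
  · rw [hz]; simp
  · rw [List.head?_reverse]; exact hgb
  · rw [List.getLast?_reverse]; exact hha

lemma shape_eq (p : ℕ) (hp : 1 ≤ p) (c : α) (X : List α) :
    List.replicate p c ++ X = List.replicate (p - 1) c ++ (c :: X) := by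
  have : p = (p - 1) + 1 := by omega
  rw [this, List.replicate_succ', Nat.add_sub_cancel]
  simp [List.append_assoc]

lemma leftReduce_shape {a c : α} {k : ℕ} {w' : List α} (hac : a ≠ c)
    (hw' : w'.head? ≠ some c) :
    leftReduce (a :: (List.replicate k c ++ (c :: w'))) = c :: w' := by
  show truncHead (List.dropWhile (· == a) (a :: (List.replicate k c ++ (c :: w')))) = c :: w'
  rw [List.dropWhile_cons, if_pos (by simp), replicate_append_cons, List.dropWhile_cons,
    if_neg (by simp [Ne.symm hac]), ← replicate_append_cons]
  exact truncHead_replicate_cons k c w' hw'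

def recFun : List α → List α → List α
  | a :: vt, b :: vt' =>
      a :: ((List.replicate ((a :: vt).length - (leftReduce (a :: vt)).length - 1)
        ((leftReduce (a :: vt)).headD a) ++ vt'.reverse) ++ [b])
  | _, _ => []

lemma recFun_eq {a b c d : α} {p q : ℕ} {M : List α} (hp : 1 ≤ p)
    (hac : a ≠ c) (hMc : M.head? ≠ some c) (hcd : M = [] → c ≠ d) :
    recFun (a :: (List.replicate p c ++ M ++ [d]))
        (b :: (List.replicate q d ++ M.reverse ++ [c]))
      = a :: ((List.replicate p c ++ M ++ List.replicate q d) ++ [b]) := by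
  have hw' : (M ++ [d]).head? ≠ some c := by
    cases hM : M with
    | nil =>
      simp only [List.nil_append, List.head?_cons, ne_eq, Option.some.injEq]
      exact fun he => (hcd hM) he.symm
    | cons mh mt =>
      rw [List.head?_append_of_ne_nil _ (by simp)]
      rw [← hM]
      exact hMc
  have hshape : List.replicate p c ++ M ++ [d]
      = List.replicate (p - 1) c ++ (c :: (M ++ [d])) := by
    rw [List.append_assoc, shape_eq p hp c (M ++ [d])]
  have hlr : leftReduce (a :: (List.replicate p c ++ M ++ [d])) = c :: (M ++ [d]) := by
    rw [hshape]
    exact leftReduce_shape hac hw'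
  show a :: ((List.replicate
        ((a :: (List.replicate p c ++ M ++ [d])).length
          - (leftReduce (a :: (List.replicate p c ++ M ++ [d]))).length - 1)
        ((leftReduce (a :: (List.replicate p c ++ M ++ [d]))).headD a)
      ++ (List.replicate q d ++ M.reverse ++ [c]).reverse) ++ [b]) = _
  rw [hlr]
  have hcount : (a :: (List.replicate p c ++ M ++ [d])).length - (c :: (M ++ [d])).length - 1
      = p - 1 := by
    simp only [List.length_cons, List.length_append, List.length_replicate,
      List.length_singleton]
    omega
  rw [hcount]
  have hrev : (List.replicate q d ++ M.reverse ++ [c]).reverse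
      = c :: (M ++ List.replicate q d) := by
    simp [List.reverse_append, List.reverse_replicate]
  rw [hrev]
  simp only [List.headD_cons]
  have h2 : List.replicate p c ++ M ++ List.replicate q d
      = List.replicate (p - 1) c ++ (c :: (M ++ List.replicate q d)) := by
    rw [List.append_assoc, shape_eq p hp c]
  rw [h2]

end StmtNine

namespace StmtNine
variable {α : Type*} [DecidableEq α]

lemma wprime_head {M : List α} {c d : α} (hMc : M.head? ≠ some c) (hcd : M = [] → c ≠ d) :
    (M ++ [d]).head? ≠ some c := by
  cases hM : M with
  | nil =>
    simp only [List.nil_append, List.head?_cons, ne_eq, Option.some.injEq]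
    exact fun he => (hcd hM) he.symm
  | cons mh mt =>
    rw [List.head?_append_of_ne_nil _ (by simp)]
    rw [← hM]
    exact hMc

lemma core_rev_bridge {M : List α} {c d : α} {p : ℕ} (hp : 1 ≤ p)
    (hMd : M.getLast? ≠ some d) (hcd : M = [] → c ≠ d) (Y : List α) :
    (d :: (M.reverse ++ (List.replicate p c ++ Y))).head?
      ≠ (d :: (M.reverse ++ (List.replicate p c ++ Y))).tail.head? := by
  simp only [List.head?_cons, List.tail_cons]
  cases hM : M.reverse with
  | nil =>
    rw [List.nil_append, head?_replicate_append hp]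
    have hM0 : M = [] := by simpa using hM
    simp only [ne_eq, Option.some.injEq]
    exact fun he => (hcd hM0) he.symm
  | cons mh mt =>
    rw [List.cons_append, List.head?_cons]
    have hmh : M.getLast? = some mh := by
      rw [← List.head?_reverse, hM]; rfl
    simp only [ne_eq, Option.some.injEq]
    intro he
    apply hMd
    rw [hmh, he]

theorem vgood_of_type4 {z T : List α} (h : IsType4MAW z T) :
    Vgood (ctxFinset T) (vcore z) := by
  obtain ⟨a, b, c, d, p, q, M, hp, hq, hac, hbd, hMc, hMd, hcd, hzz, hvc, -⟩ := type4_data h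
  obtain ⟨hmaw, -⟩ := h
  have hzne : z ≠ [] := by rw [hzz]; simp
  have hw'h : (M ++ [d]).head? ≠ some c := wprime_head hMc hcd
  have hshape : a :: (List.replicate p c ++ M ++ [d])
      = a :: (List.replicate (p - 1) c ++ (c :: (M ++ [d]))) := by
    rw [List.append_assoc, shape_eq p hp c]
  -- infix occurrences of z.dropLast and z.tail
  have hadrop : z.dropLast = a :: (List.replicate p c ++ M ++ List.replicate q d) := by
    rw [hzz, ← List.cons_append, List.dropLast_concat]
  have hztail : z.tail
      = (List.replicate p c ++ M ++ List.replicate q d) ++ [b] := by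
    rw [hzz, List.tail_cons]
  have hdropinf : z.dropLast <:+: T := by
    apply hmaw.2.2
    · exact List.IsPrefix.isInfix ⟨[z.getLast hzne], List.dropLast_append_getLast hzne⟩
    · intro he
      have := congrArg List.length he
      rw [List.length_dropLast] at this
      have hzl : 1 ≤ z.length := by
        rw [hzz]; simp
      omega
  have htailinf : z.tail <:+: T := by
    apply hmaw.2.2
    · exact (List.tail_suffix z).isInfix
    · intro he
      have := congrArg List.length he
      rw [List.length_tail] at this
      have hzl : 1 ≤ z.length := by rw [hzz]; simp
      omega
  obtain ⟨P, Q, hPQ⟩ := hdropinf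
  obtain ⟨P', Q', hPQ'⟩ := htailinf
  have hqq : List.replicate q d = d :: List.replicate (q - 1) d := by
    conv_lhs => rw [show q = (q - 1) + 1 by omega]
    rw [List.replicate_succ]
  -- occurrence of v = a :: (replicate p c ++ M ++ [d])
  have hu_split : a :: (List.replicate p c ++ M ++ List.replicate q d)
      = (a :: (List.replicate p c ++ M ++ [d])) ++ List.replicate (q - 1) d := by
    rw [List.cons_append]
    congr 1
    rw [hqq]
    simp [List.append_assoc]
  have hsplit1 : T = P ++ (a :: (List.replicate p c ++ M ++ [d]))
      ++ (List.replicate (q - 1) d ++ Q) := by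
    rw [← hPQ, hadrop, hu_split]
    simp [List.append_assoc]
  have hvrev : (a :: (List.replicate p c ++ M ++ [d])).reverse
      = d :: (M.reverse ++ (List.replicate p c ++ [a])) := by
    simp [List.reverse_append, List.append_assoc]
  have hvbr := core_rev_bridge hp hMd hcd [a]
  rw [← hvrev] at hvbr
  have hv2 : 2 ≤ (a :: (List.replicate p c ++ M ++ [d])).length := by
    simp only [List.length_cons, List.length_append, List.length_replicate,
      List.length_singleton]
    omega
  obtain ⟨hxmem, hxpre⟩ := ctx_of_split hsplit1 hv2 hvbr
  -- occurrence of w = c :: (M ++ [d])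
  have hub_split : (List.replicate p c ++ M ++ List.replicate q d) ++ [b]
      = List.replicate (p - 1) c
        ++ ((c :: (M ++ [d])) ++ (List.replicate (q - 1) d ++ [b])) := by
    rw [show List.replicate p c ++ M = List.replicate (p-1) c ++ (c :: M) from shape_eq p hp c M]
    rw [hqq]
    simp [List.append_assoc]
  have hsplit2 : T = (P' ++ List.replicate (p - 1) c) ++ (c :: (M ++ [d]))
      ++ ((List.replicate (q - 1) d ++ [b]) ++ Q') := by
    rw [← hPQ', hztail, hub_split]
    simp [List.append_assoc]
  have hwrev : (c :: (M ++ [d])).reverse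
      = d :: (M.reverse ++ (List.replicate 1 c ++ [])) := by
    simp [List.reverse_append]
  have hwbr := core_rev_bridge (le_refl 1) hMd hcd ([] : List α)
  rw [← hwrev] at hwbr
  have hw2 : 2 ≤ (c :: (M ++ [d])).length := by simp
  obtain ⟨hymem, hypre⟩ := ctx_of_split hsplit2 hw2 hwbr
  -- assemble
  rw [hvc]
  refine ⟨a, c, p - 1, M ++ [d], hshape, hac, hw'h,
    ⟨(a :: (List.replicate p c ++ M ++ [d])).reverse ++ P.reverse, hxmem, hxpre⟩,
    ⟨(c :: (M ++ [d])).reverse ++ (P' ++ List.replicate (p - 1) c).reverse, hymem,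
      hypre, ?_⟩⟩
  intro hpre
  have hy : (c :: (M ++ [d])).reverse ++ (P' ++ List.replicate (p - 1) c).reverse
      = ((c :: (M ++ [d])).reverse ++ List.replicate (p - 1) c) ++ P'.reverse := by
    simp [List.reverse_append, List.append_assoc]
  have hrv : (a :: (List.replicate p c ++ M ++ [d])).reverse
      = ((c :: (M ++ [d])).reverse ++ List.replicate (p - 1) c) ++ [a] := by
    rw [hshape]
    exact rev_shape a c (p - 1) (M ++ [d])
  rw [hrv, hy] at hpre
  have h1 : [a] <+: P'.reverse := (List.prefix_append_right_inj _).1 hpre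
  obtain ⟨t, ht⟩ := h1
  have hP' : P' = t.reverse ++ [a] := by
    have h2 := congrArg List.reverse ht
    rw [List.reverse_reverse, List.reverse_append] at h2
    rw [← h2]
    simp
  apply hmaw.2.1
  refine ⟨t.reverse, Q', ?_⟩
  rw [← hPQ', hztail, hP', hzz]
  simp [List.append_assoc]

end StmtNine

namespace StmtNine
variable {α : Type*} [DecidableEq α]

lemma vgood_finite (S : Finset (List α)) : {v : List α | Vgood S v}.Finite := by
  classical
  apply Set.Finite.subset
    (Set.Finite.image List.reverse (S.biUnion (fun x => x.inits.toFinset)).finite_toSet)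
  intro v hv
  obtain ⟨a, c, k, w', hsh, hac, hw', ⟨x, hxS, hx⟩, -⟩ := hv
  refine ⟨v.reverse, ?_, by simp⟩
  simp only [Finset.coe_biUnion, Set.mem_iUnion, Finset.mem_coe]
  exact ⟨x, hxS, by
    rw [List.mem_toFinset, List.mem_inits]
    exact hx⟩

lemma recFun_recovers {z T : List α} (hz : IsType4MAW z T) :
    recFun (vcore z) (vcore z.reverse) = z := by
  obtain ⟨a, b, c, d, p, q, M, hp, hq, hac, hbd, hMc, hMd, hcd, hzz, hvc, hvcr⟩ :=
    type4_data hz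
  rw [hvc, hvcr, recFun_eq hp hac hMc hcd, ← hzz]

theorem main_bound (T : List α) :
    {z : List α | IsType4MAW z T}.ncard ≤ (2 * (2 * rleSize T - 3)) ^ 2 := by
  classical
  have hfin1 := vgood_finite (ctxFinset T)
  have hfin2 := vgood_finite (ctxFinset T.reverse)
  have key : {z : List α | IsType4MAW z T}.ncard
      ≤ (hfin1.toFinset ×ˢ hfin2.toFinset).card := by
    apply ncard_le_of_rel _ _ (fun z l => l = (vcore z, vcore z.reverse))
    · intro z hz
      refine ⟨(vcore z, vcore z.reverse), ?_, rfl⟩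
      rw [Finset.mem_product]
      constructor
      · rw [Set.Finite.mem_toFinset]
        exact vgood_of_type4 hz
      · rw [Set.Finite.mem_toFinset]
        exact vgood_of_type4 (type4_reverse hz)
    · intro z₁ hz₁ z₂ hz₂ l hl₁ hl₂
      have h12 := hl₁.symm.trans hl₂
      have e1 : vcore z₁ = vcore z₂ := congrArg Prod.fst h12
      have e2 : vcore z₁.reverse = vcore z₂.reverse := congrArg Prod.snd h12
      calc z₁ = recFun (vcore z₁) (vcore z₁.reverse) := (recFun_recovers hz₁).symm
        _ = recFun (vcore z₂) (vcore z₂.reverse) := by rw [e1, e2]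
        _ = z₂ := recFun_recovers hz₂
  rw [Finset.card_product] at key
  have hc1 : hfin1.toFinset.card ≤ 3 * ((ctxFinset T).card - 1) := by
    rw [← Set.ncard_eq_toFinset_card _ hfin1]
    exact Vgood_ncard _
  have hc2 : hfin2.toFinset.card ≤ 3 * ((ctxFinset T.reverse).card - 1) := by
    rw [← Set.ncard_eq_toFinset_card _ hfin2]
    exact Vgood_ncard _
  have hm1 : (ctxFinset T).card ≤ chg T := ctxFinset_card_le T
  have hm2 : (ctxFinset T.reverse).card ≤ chg T := by
    have := ctxFinset_card_le T.reverse
    rw [chg_reverse] at this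
    exact this
  have harith : 3 * (chg T - 1) ≤ 2 * (2 * rleSize T - 3) := by
    by_cases hT : T = []
    · subst hT
      show 3 * (chg ([] : List α) - 1) ≤ 2 * (2 * rleSize ([] : List α) - 3)
      have h1 : chg ([] : List α) = 0 := rfl
      have h2 : rleSize ([] : List α) = 0 := rfl
      rw [h1, h2]
    · have := rleSize_eq_chg hT
      omega
  have hA : hfin1.toFinset.card ≤ 2 * (2 * rleSize T - 3) := by omega
  have hB : hfin2.toFinset.card ≤ 2 * (2 * rleSize T - 3) := by omega
  calc {z : List α | IsType4MAW z T}.ncard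
      ≤ hfin1.toFinset.card * hfin2.toFinset.card := key
    _ ≤ (2 * (2 * rleSize T - 3)) * (2 * (2 * rleSize T - 3)) := Nat.mul_le_mul hA hB
    _ = (2 * (2 * rleSize T - 3)) ^ 2 := (sq _).symm

end StmtNine

theorem stmt9 {α : Type*} [DecidableEq α] (T : List α) :
    {z : List α | IsType4MAW z T}.ncard ≤ (2 * (2 * rleSize T - 3)) ^ 2 :=
  StmtNine.main_bound T
end

section
/- Let T be a string, c a character, and a, b characters with a ≠ c and b ≠ c. Define BS_{acb}(T) as the set of substrings of T of the form a c^ℓ b (ℓ ≥ 1) and ℓ_max = max{ ℓ : a c^ℓ b ∈ BS_{acb}(T) } (assuming BS_{acb}(T) is nonempty). Then for every 1 ≤ k < ℓ_max, the string a c^k b is a minimal absent word for T if and only if a c^k b ∉ BS_{acb}(T). -/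
lemma infix_dropLast_or_tail {α : Type*} {v w : List α}
    (h : v <:+: w) (hne : v ≠ w) : v <:+: w.dropLast ∨ v <:+: w.tail := by
  obtain ⟨s, t, rfl⟩ := h
  rcases eq_or_ne t [] with rfl | ht
  · rcases eq_or_ne s [] with rfl | hs
    · simp at hne
    · right
      obtain ⟨x, s', rfl⟩ := List.exists_cons_of_ne_nil hs
      simp only [List.append_nil, List.cons_append, List.tail_cons]
      exact (List.suffix_append s' v).isInfix
  · left
    rw [List.append_assoc, List.dropLast_append_of_ne_nil
      (by simp [ht] : v ++ t ≠ []), List.dropLast_append_of_ne_nil ht]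
    exact ⟨s, t.dropLast, by simp⟩

theorem stmt13 {α : Type*} [DecidableEq α] (T : List α) (a b c : α)
    (hac : a ≠ c) (hbc : b ≠ c) (ℓmax : ℕ) (hℓ1 : 1 ≤ ℓmax)
    (hocc : (a :: (List.replicate ℓmax c ++ [b])) <:+: T)
    (hmax : ∀ ℓ : ℕ, 1 ≤ ℓ → (a :: (List.replicate ℓ c ++ [b])) <:+: T → ℓ ≤ ℓmax)
    (k : ℕ) (hk1 : 1 ≤ k) (hk : k < ℓmax) :
    IsMAW (a :: (List.replicate k c ++ [b])) T ↔
      ¬ (a :: (List.replicate k c ++ [b])) <:+: T := by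
  constructor
  · intro h
    exact h.2.1
  · intro habs
    refine ⟨by simp, habs, ?_⟩
    intro v hv hne
    have hrep : List.replicate ℓmax c = List.replicate k c ++ List.replicate (ℓmax - k) c := by
      rw [← List.replicate_add]
      congr 1
      omega
    rcases infix_dropLast_or_tail hv hne with h1 | h1
    · -- v <:+: a :: replicate k c
      have hdl : (a :: (List.replicate k c ++ [b])).dropLast = a :: List.replicate k c := by
        rw [← List.cons_append, List.dropLast_concat]
      rw [hdl] at h1
      refine h1.trans (List.IsInfix.trans ?_ hocc)
      refine List.IsPrefix.isInfix ?_
      refine ⟨List.replicate (ℓmax - k) c ++ [b], ?_⟩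
      have h2 : List.replicate k c ++ List.replicate (ℓmax - k) c = List.replicate ℓmax c := by
        rw [← List.replicate_add]
        congr 1
        omega
      rw [List.cons_append, ← List.append_assoc, h2]
    · -- v <:+: replicate k c ++ [b]
      simp only [List.tail_cons] at h1
      refine h1.trans (List.IsInfix.trans ?_ hocc)
      refine List.IsInfix.trans ?_ (List.suffix_cons _ _).isInfix
      have hrep' : List.replicate ℓmax c = List.replicate (ℓmax - k) c ++ List.replicate k c := by
        rw [← List.replicate_add]
        congr 1
        omega
      exact List.IsSuffix.isInfix ⟨List.replicate (ℓmax - k) c, by rw [hrep', List.append_assoc]⟩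
end

section
/- Let T be a string, c a character, and suppose a c^i b' and a' c^j b are substrings of T with a ≠ c, b ≠ c, b' ≠ b, a' ≠ a, and let ℓ = min{i, j}. If a c^ℓ b does not occur in T, then for every 1 ≤ k ≤ ℓ such that a c^k b does not occur in T, the string a c^k b is a minimal absent word for T. -/
theorem stmt14 {α : Type*} [DecidableEq α] (T : List α) (a a' b b' c : α)
    (i j : ℕ) (hi : 1 ≤ i) (hj : 1 ≤ j)
    (hac : a ≠ c) (hbc : b ≠ c) (hbb : b' ≠ b) (haa : a' ≠ a)
    (h1 : (a :: (List.replicate i c ++ [b'])) <:+: T)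
    (h2 : (a' :: (List.replicate j c ++ [b])) <:+: T)
    (hcomb : ¬ (a :: (List.replicate (min i j) c ++ [b])) <:+: T)
    (k : ℕ) (hk1 : 1 ≤ k) (hk : k ≤ min i j)
    (habs : ¬ (a :: (List.replicate k c ++ [b])) <:+: T) :
    IsMAW (a :: (List.replicate k c ++ [b])) T := by
  refine ⟨by simp, habs, ?_⟩
  intro v hv hne
  have hki : k ≤ i := le_trans hk (min_le_left _ _)
  have hkj : k ≤ j := le_trans hk (min_le_right _ _)
  obtain ⟨s, t, hst⟩ := hv
  rcases s with _ | ⟨x, s⟩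
  · -- v is a proper prefix
    simp only [List.nil_append] at hst
    have hvp : v <+: a :: (List.replicate k c ++ [b]) := ⟨t, hst⟩
    have hlen : v.length < k + 2 := by
      have := hvp.length_le
      simp at this
      rcases lt_or_eq_of_le this with h | h
      · omega
      · exfalso
        exact hne (List.IsPrefix.eq_of_length hvp (by simpa using h))
    have hvp2 : v <+: a :: List.replicate k c := by
      rw [List.prefix_iff_eq_take] at hvp ⊢
      rw [hvp]
      rw [show a :: (List.replicate k c ++ [b]) = (a :: List.replicate k c) ++ [b] by simp,
        List.take_append_of_le_length (by simp; omega)]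
      simp [List.length_take]
    have hpi : (a :: List.replicate k c) <+: a :: (List.replicate i c ++ [b']) := by
      refine ⟨List.replicate (i - k) c ++ [b'], ?_⟩
      simp [← List.append_assoc, ← List.replicate_add]
      omega
    exact ((hvp2.trans hpi).isInfix).trans h1
  · -- v is inside the tail
    have hst' : s ++ v ++ t = List.replicate k c ++ [b] := by
      simpa using congrArg List.tail hst
    have hvi : v <:+: List.replicate k c ++ [b] := ⟨s, t, hst'⟩
    have hsuf : (List.replicate k c ++ [b]) <:+ a' :: (List.replicate j c ++ [b]) := by
      refine ⟨a' :: List.replicate (j - k) c, ?_⟩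
      simp [← List.append_assoc, ← List.replicate_add]
      omega
    exact (hvi.trans hsuf.isInfix).trans h2
end
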